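/- Let A be a real symmetric positive-definite (NM)×(NM) matrix with λ_min(A) = μ > 0, indexed by a partition of {1,...,NM} into N consecutive blocks of size M, and let B be the block-diagonal part of A. Let y ∈ ℝ^{NM} and let F : ℝ → ℝ^{NM} be differentiable with F'(t) = -½(A + B)(F(t) - y) for all t ≥ 0. Then for all t ≥ 0, ‖F(t) - y‖² ≤ e^{-2μt} ‖F(0) - y‖². (This combines the eigenvalue comparison λ_min(½(A+B)) ≥ λ_min(A) with the exponential-decay lemma: the Fed-CO₂ dynamics, driven by ½(V_on^∞ + V_off^∞), converge at least at the rate governed by λ_min(V_on^∞) of FedBN.) -/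

import Mathlib

open scoped Matrix


/-- The smallest eigenvalue of a real symmetric (Hermitian) matrix. -/
noncomputable def minEig {n : Type*} [Fintype n] [DecidableEq n]
    {A : Matrix n n ℝ} (hA : A.IsHermitian) : ℝ :=
  ⨅ i, hA.eigenvalues i

/-- Quadratic form lower bound from an eigenvalue lower bound. -/
lemma quad_lower_aux {n : Type*} [Fintype n] [DecidableEq n] {S : Matrix n n ℝ}
    (hS : S.IsHermitian) {μ : ℝ} (hμ : ∀ i, μ ≤ hS.eigenvalues i) (x : n → ℝ) :
    μ * (x ⬝ᵥ x) ≤ x ⬝ᵥ (S *ᵥ x) := by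
  have hdiag : (Matrix.diagonal (fun i => hS.eigenvalues i - μ)).PosSemidef :=
    Matrix.posSemidef_diagonal_iff.mpr (fun i => sub_nonneg.mpr (hμ i))
  set U : Matrix n n ℝ := (hS.eigenvectorUnitary : Matrix n n ℝ) with hU
  have hUU : U * Uᴴ = 1 := by
    have := (Matrix.mem_unitaryGroup_iff).mp hS.eigenvectorUnitary.2
    simpa [Matrix.star_eq_conjTranspose] using this
  have h1 : S - μ • 1 = U * Matrix.diagonal (fun i => hS.eigenvalues i - μ) * Uᴴ := by
    have hspec : S = U * Matrix.diagonal (RCLike.ofReal ∘ hS.eigenvalues) * Uᴴ := by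
      simpa [Matrix.star_eq_conjTranspose] using hS.spectral_theorem
    have hone : (μ • (1 : Matrix n n ℝ)) = U * (μ • (1 : Matrix n n ℝ)) * Uᴴ := by
      rw [Matrix.mul_smul, Matrix.smul_mul, Matrix.mul_one, hUU]
    have hd : Matrix.diagonal (RCLike.ofReal ∘ hS.eigenvalues) - μ • (1 : Matrix n n ℝ)
        = Matrix.diagonal (fun i => hS.eigenvalues i - μ) := by
      ext i j
      by_cases h : i = j
      · subst h; simp [Matrix.one_apply]
      · simp [Matrix.one_apply_ne h, Matrix.diagonal_apply_ne _ h]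
    calc S - μ • 1 = U * Matrix.diagonal (RCLike.ofReal ∘ hS.eigenvalues) * Uᴴ
          - U * (μ • (1 : Matrix n n ℝ)) * Uᴴ := by rw [← hspec, ← hone]
      _ = U * (Matrix.diagonal (RCLike.ofReal ∘ hS.eigenvalues) - μ • 1) * Uᴴ := by
          rw [Matrix.mul_sub, Matrix.sub_mul]
      _ = _ := by rw [hd]
  have hps : (S - μ • 1).PosSemidef := h1 ▸ hdiag.mul_mul_conjTranspose_same U
  have h2 := hps.re_dotProduct_nonneg x
  simp only [RCLike.re_to_real, star_trivial, Matrix.sub_mulVec,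
    Matrix.smul_mulVec, Matrix.one_mulVec, dotProduct_sub,
    dotProduct_smul, smul_eq_mul] at h2
  linarith

lemma proj_quad_aux {N M : ℕ} {A B : Matrix (Fin N × Fin M) (Fin N × Fin M) ℝ}
    (hB : ∀ p q : Fin N × Fin M, B p q = if p.1 = q.1 then A p q else 0)
    (x : Fin N × Fin M → ℝ) :
    x ⬝ᵥ (B *ᵥ x) = ∑ k : Fin N,
      (fun p : Fin N × Fin M => if p.1 = k then x p else 0) ⬝ᵥ
        (A *ᵥ fun p : Fin N × Fin M => if p.1 = k then x p else 0) := by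
  simp only [dotProduct, Matrix.mulVec, Finset.mul_sum]
  conv_rhs => rw [Finset.sum_comm]
  refine Finset.sum_congr rfl (fun p _ => ?_)
  conv_rhs => rw [Finset.sum_comm]
  refine Finset.sum_congr rfl (fun q _ => ?_)
  rw [hB]
  have : ∀ k : Fin N, (if p.1 = k then x p else 0) * (A p q * if q.1 = k then x q else 0)
      = if p.1 = k then (if q.1 = p.1 then x p * (A p q * x q) else 0) else 0 := by
    intro k
    by_cases h : p.1 = k
    · subst h
      by_cases h2 : q.1 = p.1 <;> simp [h2]
    · simp [h]
  rw [Finset.sum_congr rfl (fun k _ => this k), Finset.sum_ite_eq]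
  simp only [Finset.mem_univ, if_true]
  by_cases h : p.1 = q.1
  · rw [if_pos h, if_pos h.symm]
  · rw [if_neg h, if_neg (fun hh => h hh.symm), zero_mul, mul_zero]

lemma proj_normsq_aux {N M : ℕ} (x : Fin N × Fin M → ℝ) :
    (∑ k : Fin N,
      (fun p : Fin N × Fin M => if p.1 = k then x p else 0) ⬝ᵥ
        (fun p : Fin N × Fin M => if p.1 = k then x p else 0)) = x ⬝ᵥ x := by
  simp only [dotProduct]
  rw [Finset.sum_comm]
  refine Finset.sum_congr rfl (fun p _ => ?_)
  have : ∀ k : Fin N, (if p.1 = k then x p else 0) * (if p.1 = k then x p else 0)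
      = if p.1 = k then x p * x p else 0 := by
    intro k; by_cases h : p.1 = k <;> simp [h]
  rw [Finset.sum_congr rfl (fun k _ => this k), Finset.sum_ite_eq]
  simp

/-- Let `A` be a real symmetric positive-definite (NM)×(NM) matrix with
smallest eigenvalue `μ > 0`, and let `B` be the block-diagonal part of `A`.
If `F' t = -½(A + B)(F t - y)` for all `t ≥ 0`, then
`‖F t - y‖² ≤ exp (-2 μ t) ‖F 0 - y‖²` for all `t ≥ 0`. -/
theorem fedco2_dynamics_exponential_decay
    (N M : ℕ) (hN : 0 < N) (hM : 0 < M)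
    (A B : Matrix (Fin N × Fin M) (Fin N × Fin M) ℝ)
    (hA : A.PosDef)
    (μ : ℝ) (hμ : μ = minEig hA.1) (hμpos : 0 < μ)
    (hB : ∀ p q : Fin N × Fin M,
      B p q = if p.1 = q.1 then A p q else 0)
    (y : EuclideanSpace ℝ (Fin N × Fin M))
    (F : ℝ → EuclideanSpace ℝ (Fin N × Fin M))
    (hF : Differentiable ℝ F)
    (hderiv : ∀ t : ℝ, 0 ≤ t →
      HasDerivAt F
        (-(Matrix.toEuclideanLin ((1 / 2 : ℝ) • (A + B)) (F t - y))) t) :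
    ∀ t : ℝ, 0 ≤ t →
      ‖F t - y‖ ^ 2 ≤ Real.exp (-2 * μ * t) * ‖F 0 - y‖ ^ 2 := by
  classical
  -- eigenvalue lower bound
  have heig : ∀ i, μ ≤ hA.1.eigenvalues i := by
    intro i
    rw [hμ, minEig]
    exact ciInf_le (Finite.bddBelow_range _) i
  set C : Matrix (Fin N × Fin M) (Fin N × Fin M) ℝ := (1 / 2 : ℝ) • (A + B) with hC
  -- dot-product lower bound for C
  have hquad : ∀ x : Fin N × Fin M → ℝ, μ * (x ⬝ᵥ x) ≤ x ⬝ᵥ (C *ᵥ x) := by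
    intro x
    have hA' : μ * (x ⬝ᵥ x) ≤ x ⬝ᵥ (A *ᵥ x) := quad_lower_aux hA.1 heig x
    have hB' : μ * (x ⬝ᵥ x) ≤ x ⬝ᵥ (B *ᵥ x) := by
      rw [proj_quad_aux hB x, ← proj_normsq_aux x, Finset.mul_sum]
      exact Finset.sum_le_sum fun k _ => quad_lower_aux hA.1 heig _
    have : x ⬝ᵥ (C *ᵥ x) = (1 / 2 : ℝ) * (x ⬝ᵥ (A *ᵥ x)) + (1 / 2 : ℝ) * (x ⬝ᵥ (B *ᵥ x)) := by
      simp [hC, Matrix.smul_mulVec, Matrix.add_mulVec, dotProduct_add,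
        dotProduct_smul, smul_eq_mul, mul_add]
    rw [this]; linarith
  -- inner-product version
  have hkey : ∀ v : EuclideanSpace ℝ (Fin N × Fin M),
      μ * (inner ℝ v v : ℝ) ≤ (inner ℝ v (Matrix.toEuclideanLin C v) : ℝ) := by
    intro v
    have h1 : (inner ℝ v (Matrix.toEuclideanLin C v) : ℝ)
        = (WithLp.equiv 2 _ v) ⬝ᵥ (C *ᵥ (WithLp.equiv 2 _ v)) := by
      rw [EuclideanSpace.inner_eq_star_dotProduct]
      simp [dotProduct_comm]
    have h2 : (inner ℝ v v : ℝ) = (WithLp.equiv 2 _ v) ⬝ᵥ (WithLp.equiv 2 _ v) := by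
      rw [EuclideanSpace.inner_eq_star_dotProduct]; simp
    rw [h1, h2]
    exact hquad _
  set X : ℝ → EuclideanSpace ℝ (Fin N × Fin M) := fun t => F t - y with hX
  set g : ℝ → ℝ := fun t => Real.exp (2 * μ * t) * (inner ℝ (X t) (X t) : ℝ) with hg
  have hXc : Continuous X := hF.continuous.sub continuous_const
  have hXd : ∀ t : ℝ, 0 ≤ t →
      HasDerivAt X (-(Matrix.toEuclideanLin C (X t))) t := by
    intro t ht
    simpa [hX] using (hderiv t ht).sub_const y
  have hgderiv : ∀ t : ℝ, 0 ≤ t → HasDerivAt g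
      (2 * μ * Real.exp (2 * μ * t) * (inner ℝ (X t) (X t) : ℝ)
        + Real.exp (2 * μ * t) *
          ((inner ℝ (X t) (-(Matrix.toEuclideanLin C (X t))) : ℝ)
            + (inner ℝ (-(Matrix.toEuclideanLin C (X t))) (X t) : ℝ))) t := by
    intro t ht
    have he : HasDerivAt (fun t : ℝ => Real.exp (2 * μ * t)) (2 * μ * Real.exp (2 * μ * t)) t := by
      have h0 : HasDerivAt (fun t : ℝ => 2 * μ * t) (2 * μ) t := by
        simpa using (hasDerivAt_id t).const_mul (2 * μ)
      simpa [mul_comm] using h0.exp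
    have hi : HasDerivAt (fun t => (inner ℝ (X t) (X t) : ℝ))
        ((inner ℝ (X t) (-(Matrix.toEuclideanLin C (X t))) : ℝ)
          + (inner ℝ (-(Matrix.toEuclideanLin C (X t))) (X t) : ℝ)) t :=
      HasDerivAt.inner ℝ (hXd t ht) (hXd t ht)
    exact he.mul hi
  have hmono : AntitoneOn g (Set.Ici (0 : ℝ)) := by
    refine antitoneOn_of_deriv_nonpos (convex_Ici 0) ?_ ?_ ?_
    · exact ((Real.continuous_exp.comp (continuous_const.mul continuous_id)).mul
        (hXc.inner hXc)).continuousOn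
    · intro t ht
      rw [interior_Ici] at ht
      exact (hgderiv t (le_of_lt ht)).differentiableAt.differentiableWithinAt
    · intro t ht
      rw [interior_Ici] at ht
      rw [(hgderiv t (le_of_lt ht)).deriv]
      have h1 : (inner ℝ (X t) (-(Matrix.toEuclideanLin C (X t))) : ℝ)
          = -(inner ℝ (X t) (Matrix.toEuclideanLin C (X t)) : ℝ) := inner_neg_right _ _
      have h2 : (inner ℝ (-(Matrix.toEuclideanLin C (X t))) (X t) : ℝ)
          = -(inner ℝ (X t) (Matrix.toEuclideanLin C (X t)) : ℝ) := by
        rw [real_inner_comm]; exact inner_neg_right _ _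
      rw [h1, h2]
      have hk := hkey (X t)
      have hexp := Real.exp_pos (2 * μ * t)
      nlinarith
  intro t ht
  have hle : g t ≤ g 0 := hmono (Set.self_mem_Ici) ht ht
  have hg0 : g 0 = (inner ℝ (X 0) (X 0) : ℝ) := by simp [hg]
  have hn : ∀ s : ℝ, (inner ℝ (X s) (X s) : ℝ) = ‖X s‖ ^ 2 := fun s =>
    real_inner_self_eq_norm_sq (X s)
  rw [hg0, hn 0] at hle
  simp only [hg, hn t] at hle
  have hexp : (0 : ℝ) < Real.exp (2 * μ * t) := Real.exp_pos _
  have : Real.exp (-2 * μ * t) = (Real.exp (2 * μ * t))⁻¹ := by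
    rw [← Real.exp_neg]; ring_nf
  have hXt : X t = F t - y := rfl
  have hX0 : X 0 = F 0 - y := rfl
  rw [← hXt, ← hX0, this, ← div_eq_inv_mul, le_div_iff₀ hexp, mul_comm]
  exact hle
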